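/- For every (x,t) ∈ ℝ^d × ℝ, the difference of posterior standard deviations satisfies (σ_D(x,t) − σ_D̃(x,t))² ≤ E·k((x,t),(x₁,t₁))² + k((x,t),(x₁,t₁))·Σ_{j=2}^{n} c_j·k((x,t),(x_j,t_j)) + κ̃(x,t)ᵀ M κ̃(x,t), where c ∈ ℝ^{n−1} is defined by cᵀ = G + Hᵀ and M = F − Δ̃⁻¹. -/

import Mathlib

open Matrix

private lemma sqrt_diff_sq_le {a b : ℝ} (ha : 0 ≤ a) (hab : a ≤ b) :
    (Real.sqrt a - Real.sqrt b) ^ 2 ≤ b - a := by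
  have hb : 0 ≤ b := le_trans ha hab
  have h1 := Real.sq_sqrt ha
  have h2 := Real.sq_sqrt hb
  have h3 : Real.sqrt a ≤ Real.sqrt b := Real.sqrt_le_sqrt hab
  have h4 := Real.sqrt_nonneg a
  nlinarith [mul_nonneg h4 (sub_nonneg.2 h3)]

private lemma vecMulVec_mulVec' {n : ℕ} (u v w : Fin n → ℝ) :
    vecMulVec u v *ᵥ w = (v ⬝ᵥ w) • u := by
  funext i
  simp only [mulVec, dotProduct, vecMulVec_apply, Pi.smul_apply, smul_eq_mul]
  rw [Finset.sum_mul]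
  exact Finset.sum_congr rfl fun j _ => by ring

private lemma mul_vecMulVec' {n : ℕ} (A : Matrix (Fin n) (Fin n) ℝ) (v w : Fin n → ℝ) :
    A * vecMulVec v w = vecMulVec (A *ᵥ v) w := by
  ext i j
  simp only [mul_apply, vecMulVec_apply, mulVec, dotProduct]
  rw [Finset.sum_mul]
  exact Finset.sum_congr rfl fun l _ => by ring

private lemma vecMulVec_mul' {n : ℕ} (A : Matrix (Fin n) (Fin n) ℝ) (v w : Fin n → ℝ) :
    vecMulVec v w * A = vecMulVec v (w ᵥ* A) := by
  ext i j
  simp only [mul_apply, vecMulVec_apply, vecMul, dotProduct]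
  rw [Finset.mul_sum]
  exact Finset.sum_congr rfl fun l _ => by ring

/-- Proposition 2 of the paper: pointwise bound on the squared difference of posterior
standard deviations after removing the first observation. -/
theorem stmt_4
    (d n : ℕ) (hd : 1 ≤ d) (hn : 1 ≤ n)
    (lam sig : ℝ) (hlam : 0 < lam) (hsig : 0 < sig)
    (kS kT : ℝ → ℝ)
    (hkSmeas : Measurable kS) (hkTmeas : Measurable kT)
    (hkSrange : ∀ r, kS r ∈ Set.Icc (0 : ℝ) 1) (hkTrange : ∀ r, kT r ∈ Set.Icc (0 : ℝ) 1)
    (hkS0 : kS 0 = 1) (hkT0 : kT 0 = 1)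
    (k : (EuclideanSpace ℝ (Fin d) × ℝ) → (EuclideanSpace ℝ (Fin d) × ℝ) → ℝ)
    (hk : ∀ p q, k p q = lam * kS (‖p.1 - q.1‖) * kT (|p.2 - q.2|))
    (pts : Fin (n + 1) → EuclideanSpace ℝ (Fin d) × ℝ)
    (Δ : Matrix (Fin (n + 1)) (Fin (n + 1)) ℝ)
    (hΔ : ∀ i j, Δ i j = k (pts i) (pts j) + sig ^ 2 * (if i = j then 1 else 0))
    (hPD : Δ.PosDef)
    (Δt : Matrix (Fin n) (Fin n) ℝ)
    (hΔt : Δt = Δ.submatrix Fin.succ Fin.succ)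
    (k1 : Fin n → ℝ)
    (hk1 : ∀ j : Fin n, k1 j = k (pts 0) (pts j.succ))
    (E : ℝ) (hE : E = (lam + sig ^ 2 - k1 ⬝ᵥ Δt⁻¹ *ᵥ k1)⁻¹)
    (F : Matrix (Fin n) (Fin n) ℝ)
    (hF : F = (Δt - (lam + sig ^ 2)⁻¹ • vecMulVec k1 k1)⁻¹)
    (G : Fin n → ℝ) (hG : G = -(E • (k1 ᵥ* Δt⁻¹)))
    (H : Fin n → ℝ) (hH : H = -((lam + sig ^ 2)⁻¹ • (F *ᵥ k1)))
    (σ2D σ2Dt : (EuclideanSpace ℝ (Fin d) × ℝ) → ℝ)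
    (hσ2D : ∀ p, σ2D p = lam -
      (fun i : Fin (n + 1) => k p (pts i)) ⬝ᵥ Δ⁻¹ *ᵥ (fun i : Fin (n + 1) => k p (pts i)))
    (hσ2Dt : ∀ p, σ2Dt p = lam -
      (fun j : Fin n => k p (pts j.succ)) ⬝ᵥ Δt⁻¹ *ᵥ (fun j : Fin n => k p (pts j.succ)))
    (hborder : ∀ p : EuclideanSpace ℝ (Fin d) × ℝ,
      (Matrix.fromBlocks
        (Matrix.of fun (_ : Fin 1) (_ : Fin 1) => lam)
        (Matrix.of fun (_ : Fin 1) (j : Fin (n + 1)) => k p (pts j))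
        (Matrix.of fun (i : Fin (n + 1)) (_ : Fin 1) => k p (pts i))
        Δ).PosSemidef)
    (σD σDt : (EuclideanSpace ℝ (Fin d) × ℝ) → ℝ)
    (hσD : ∀ p, σD p = Real.sqrt (σ2D p))
    (hσDt : ∀ p, σDt p = Real.sqrt (σ2Dt p))
    (c : Fin n → ℝ) (hc : c = G + H)
    (M : Matrix (Fin n) (Fin n) ℝ) (hM : M = F - Δt⁻¹) :
    ∀ p : EuclideanSpace ℝ (Fin d) × ℝ,
      (σD p - σDt p) ^ 2 ≤
        E * (k p (pts 0)) ^ 2 + k p (pts 0) * ∑ j : Fin n, c j * k p (pts j.succ) +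
          (fun j : Fin n => k p (pts j.succ)) ⬝ᵥ M *ᵥ (fun j : Fin n => k p (pts j.succ)) := by
  intro p
  have hα : (0:ℝ) < lam + sig ^ 2 := by positivity
  have hα0 : lam + sig ^ 2 ≠ 0 := ne_of_gt hα
  have hksymm : ∀ a b, k a b = k b a := fun a b => by
    rw [hk, hk, norm_sub_rev, abs_sub_comm]
  have hkself : ∀ a, k a a = lam := fun a => by
    rw [hk]; simp [hkS0, hkT0]
  have hΔsymm : ∀ i j, Δ i j = Δ j i := by
    intro i j
    rw [hΔ, hΔ, hksymm]
    by_cases h : i = j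
    · simp [h]
    · simp [h, Ne.symm h]
  have hΔ00 : Δ 0 0 = lam + sig ^ 2 := by rw [hΔ, hkself]; simp
  have hΔ0s : ∀ j : Fin n, Δ 0 j.succ = k1 j := by
    intro j; rw [hΔ, hk1]; simp [(Fin.succ_ne_zero j).symm]
  have hΔs0 : ∀ j : Fin n, Δ j.succ 0 = k1 j := fun j => (hΔsymm _ _).trans (hΔ0s j)
  have hΔss : ∀ i j : Fin n, Δ i.succ j.succ = Δt i j := fun i j => by rw [hΔt]; rfl
  have hdet : IsUnit Δ.det := isUnit_iff_ne_zero.mpr (ne_of_gt hPD.det_pos)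
  have hΔtT : Δtᵀ = Δt := by
    ext i j; rw [transpose_apply, hΔt, submatrix_apply, submatrix_apply, hΔsymm]
  have hΔtPD : Δt.PosDef := by
    refine Matrix.PosDef.of_dotProduct_mulVec_pos ?_ ?_
    · rw [hΔt]
      exact (hPD.posSemidef.submatrix Fin.succ).1
    · intro x hx
      have hy : (Fin.cons 0 x : Fin (n + 1) → ℝ) ≠ 0 := by
        intro hcon
        apply hx
        funext j
        have := congrFun hcon j.succ
        simpa using this
      have h2 := hPD.dotProduct_mulVec_pos hy
      have key : star (Fin.cons (0:ℝ) x) ⬝ᵥ Δ *ᵥ (Fin.cons 0 x) = star x ⬝ᵥ Δt *ᵥ x := by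
        simp [dotProduct, mulVec, Fin.sum_univ_succ, hΔt, star_trivial]
      rwa [key] at h2
  have hdett : IsUnit Δt.det := isUnit_iff_ne_zero.mpr (ne_of_gt hΔtPD.det_pos)
  have hinvmul : Δt⁻¹ * Δt = 1 := nonsing_inv_mul Δt hdett
  have hmulinv : Δt * Δt⁻¹ = 1 := mul_nonsing_inv Δt hdett
  set u : Fin n → ℝ := Δt⁻¹ *ᵥ k1 with hu
  set s : ℝ := k1 ⬝ᵥ u with hs
  have hΔtu : Δt *ᵥ u = k1 := by rw [hu, mulVec_mulVec, hmulinv, one_mulVec]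
  have hΔtinvT : Δt⁻¹ᵀ = Δt⁻¹ := by rw [transpose_nonsing_inv, hΔtT]
  have hvmu : k1 ᵥ* Δt⁻¹ = u := by rw [← mulVec_transpose, hΔtinvT, ← hu]
  have hvmΔt : u ᵥ* Δt = k1 := by rw [← mulVec_transpose, hΔtT, hΔtu]
  have hmv : ∀ (a : ℝ) (v : Fin n → ℝ),
      Δ *ᵥ (Fin.cons a v) = Fin.cons ((lam + sig ^ 2) * a + k1 ⬝ᵥ v)
        (fun i => k1 i * a + (Δt *ᵥ v) i) := by
    intro a v
    funext i
    induction i using Fin.cases with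
    | zero => simp [mulVec, dotProduct, Fin.sum_univ_succ, hΔ00, hΔ0s]
    | succ i => simp [mulVec, dotProduct, Fin.sum_univ_succ, hΔs0, hΔss]
  have hdc : ∀ (a a' : ℝ) (v v' : Fin n → ℝ),
      (Fin.cons a v : Fin (n+1) → ℝ) ⬝ᵥ Fin.cons a' v' = a * a' + v ⬝ᵥ v' := by
    intro a a' v v'; simp [dotProduct, Fin.sum_univ_succ]
  have hαs : 0 < lam + sig ^ 2 - s := by
    have hz : (Fin.cons 1 (-u) : Fin (n+1) → ℝ) ≠ 0 := by
      intro hcon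
      have := congrFun hcon 0
      simpa using this
    have h2 := hPD.dotProduct_mulVec_pos hz
    rw [star_trivial, hmv, hdc] at h2
    have hz2 : ((-u : Fin n → ℝ) ⬝ᵥ fun i => k1 i * 1 + (Δt *ᵥ (-u)) i) = 0 := by
      have : (fun i => k1 i * 1 + (Δt *ᵥ (-u)) i) = (0 : Fin n → ℝ) := by
        funext i; simp [mulVec_neg, hΔtu]
      rw [this, dotProduct_zero]
    rw [hz2, dotProduct_neg] at h2
    have : k1 ⬝ᵥ u = s := hs.symm
    nlinarith [h2]
  have hαs0 : lam + sig ^ 2 - s ≠ 0 := ne_of_gt hαs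
  have hE' : E = (lam + sig ^ 2 - s)⁻¹ := hE
  have hEpos : 0 < E := by rw [hE']; exact inv_pos.mpr hαs
  have hEαs : E * (lam + sig ^ 2 - s) = 1 := by rw [hE']; exact inv_mul_cancel₀ hαs0
  have hF' : F = Δt⁻¹ + E • vecMulVec u u := by
    rw [hF]
    refine inv_eq_left_inv ?_
    have h1 : vecMulVec u u * Δt = vecMulVec u k1 := by rw [vecMulVec_mul', hvmΔt]
    have h2 : Δt⁻¹ * vecMulVec k1 k1 = vecMulVec u k1 := by rw [mul_vecMulVec', ← hu]
    have h3 : vecMulVec u u * vecMulVec k1 k1 = s • vecMulVec u k1 := by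
      rw [vecMulVec_mul']
      have huk : u ᵥ* vecMulVec k1 k1 = s • k1 := by
        funext j
        simp only [vecMul, dotProduct, vecMulVec_apply, Pi.smul_apply, smul_eq_mul]
        rw [hs, show (∑ i, u i * (k1 i * k1 j)) = (∑ i, k1 i * u i) * k1 j by
          rw [Finset.sum_mul]; exact Finset.sum_congr rfl fun i _ => by ring]
        rw [show k1 ⬝ᵥ u = ∑ i, k1 i * u i from rfl]
      rw [huk]
      ext i j; simp only [vecMulVec_apply, Pi.smul_apply, smul_eq_mul, Matrix.smul_apply]
      ring
    have hexp : (Δt⁻¹ + E • vecMulVec u u) * (Δt - (lam + sig ^ 2)⁻¹ • vecMulVec k1 k1)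
        = 1 + (E - (lam + sig ^ 2)⁻¹ - E * ((lam + sig ^ 2)⁻¹ * s)) • vecMulVec u k1 := by
      simp only [add_mul, Matrix.mul_sub, Matrix.smul_mul, Matrix.mul_smul, h1, h2, h3,
        hinvmul, smul_smul]
      module
    have hco : E - (lam + sig ^ 2)⁻¹ - E * ((lam + sig ^ 2)⁻¹ * s) = 0 := by
      field_simp
      linear_combination hEαs
    rw [hexp, hco, zero_smul, add_zero]
  have hvvk1 : vecMulVec u u *ᵥ k1 = s • u := by
    rw [vecMulVec_mulVec', dotProduct_comm, ← hs]
  have hFk1 : F *ᵥ k1 = (E * (lam + sig ^ 2)) • u := by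
    rw [hF', add_mulVec, smul_mulVec, hvvk1, smul_smul, ← hu]
    rw [show E * (lam + sig ^ 2) = 1 + E * s by linear_combination hEαs]
    rw [add_smul, one_smul]
  have hH' : H = -(E • u) := by
    rw [hH, hFk1, smul_smul]
    rw [show (lam + sig ^ 2)⁻¹ * (E * (lam + sig ^ 2)) = E by field_simp]
  have hG' : G = -(E • u) := by rw [hG, hvmu]
  -- point-dependent quantities
  set k0 : ℝ := k p (pts 0) with hk0
  set b : Fin n → ℝ := fun j => k p (pts j.succ) with hb
  set q : ℝ := u ⬝ᵥ b with hq
  have hk1b : k1 ⬝ᵥ (Δt⁻¹ *ᵥ b) = q := by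
    rw [dotProduct_mulVec, hvmu, hq]
  have hbu : b ⬝ᵥ u = q := by rw [dotProduct_comm, hq]
  set w0 : ℝ := E * (k0 - q) with hw0
  set wt : Fin n → ℝ := Δt⁻¹ *ᵥ b - w0 • u with hwt
  have hκ : (fun i : Fin (n+1) => k p (pts i)) = Fin.cons k0 b := by
    funext i
    induction i using Fin.cases with
    | zero => simp [hk0]
    | succ i => simp [hb]
  have hΔw : Δ *ᵥ Fin.cons w0 wt = Fin.cons k0 b := by
    rw [hmv]
    have e0 : (lam + sig ^ 2) * w0 + k1 ⬝ᵥ wt = k0 := by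
      rw [hwt, dotProduct_sub, dotProduct_smul, hk1b, ← hs, smul_eq_mul, hw0]
      linear_combination (k0 - q) * hEαs
    have e1 : (fun i => k1 i * w0 + (Δt *ᵥ wt) i) = b := by
      funext i
      rw [hwt, mulVec_sub, mulVec_smul, mulVec_mulVec, hmulinv, one_mulVec, hΔtu]
      simp only [Pi.sub_apply, Pi.smul_apply, smul_eq_mul]
      ring
    rw [e0, e1]
  have hκinv : Δ⁻¹ *ᵥ (Fin.cons k0 b) = Fin.cons w0 wt := by
    rw [← hΔw, mulVec_mulVec, nonsing_inv_mul Δ hdet, one_mulVec]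
  have hconsdot : Fin.cons k0 b ⬝ᵥ Fin.cons w0 wt = b ⬝ᵥ (Δt⁻¹ *ᵥ b) + E * (k0 - q) ^ 2 := by
    rw [hdc, hwt, dotProduct_sub, dotProduct_smul, hbu, hw0, smul_eq_mul]
    ring
  have hσ2Dval : σ2D p = lam - (b ⬝ᵥ (Δt⁻¹ *ᵥ b) + E * (k0 - q) ^ 2) := by
    rw [hσ2D, hκ, hκinv, hconsdot]
  have hσ2Dtval : σ2Dt p = lam - b ⬝ᵥ (Δt⁻¹ *ᵥ b) := by
    rw [hσ2Dt, ← hb]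
  have hdiff : σ2Dt p - σ2D p = E * (k0 - q) ^ 2 := by
    rw [hσ2Dval, hσ2Dtval]; ring
  have hEq0 : 0 ≤ E * (k0 - q) ^ 2 := by positivity
  -- nonnegativity of σ2D from the bordered matrix
  have hσ2D0 : 0 ≤ σ2D p := by
    have h2 := (hborder p).dotProduct_mulVec_nonneg (Sum.elim (fun _ => (1:ℝ)) (-(Fin.cons w0 wt)))
    rw [star_trivial, fromBlocks_mulVec, sumElim_dotProduct_sumElim] at h2
    simp only [Sum.elim_comp_inl, Sum.elim_comp_inr] at h2
    have hDneg : Δ *ᵥ (-(Fin.cons w0 wt)) = -(Fin.cons k0 b) := by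
      rw [mulVec_neg, hΔw]
    rw [hDneg] at h2
    have hC : (Matrix.of fun (i : Fin (n+1)) (_ : Fin 1) => k p (pts i)) *ᵥ (fun _ => (1:ℝ))
        = Fin.cons k0 b := by
      funext i
      have := congrFun hκ i
      simpa [mulVec, dotProduct] using this
    rw [hC, add_neg_cancel, dotProduct_zero, add_zero] at h2
    have hfirst : ((fun _ : Fin 1 => (1:ℝ)) ⬝ᵥ
        ((Matrix.of fun (_ : Fin 1) (_ : Fin 1) => lam) *ᵥ (fun _ => (1:ℝ))
          + (Matrix.of fun (_ : Fin 1) (j : Fin (n+1)) => k p (pts j)) *ᵥ (-(Fin.cons w0 wt))))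
        = lam - (Fin.cons k0 b) ⬝ᵥ (Fin.cons w0 wt) := by
      have hκ' := fun j => congrFun hκ j
      simp only [dotProduct, mulVec, Matrix.of_apply, Pi.add_apply, Pi.neg_apply, mul_neg,
        mul_one, one_mul, Fin.sum_univ_one]
      rw [Finset.sum_neg_distrib]
      simp only [hκ']
      ring
    rw [hfirst] at h2
    rw [hσ2D, hκ, hκinv]
    exact h2
  have hle : σ2D p ≤ σ2Dt p := by linarith
  -- the right-hand side equals E * (k0 - q)^2
  have hsum : (∑ j : Fin n, c j * k p (pts j.succ)) = c ⬝ᵥ b := by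
    rw [hb]; simp [dotProduct]
  have hcb : c ⬝ᵥ b = -(2 * E * q) := by
    rw [hc, hG', hH', add_dotProduct, neg_dotProduct, smul_dotProduct,
      ← hq, smul_eq_mul]
    ring
  have hMval : b ⬝ᵥ M *ᵥ b = E * q ^ 2 := by
    rw [hM, hF', add_sub_cancel_left, smul_mulVec, vecMulVec_mulVec', ← hq,
      dotProduct_smul, dotProduct_smul, hbu, smul_eq_mul, smul_eq_mul]
    ring
  have hRHS : E * k0 ^ 2 + k0 * (∑ j : Fin n, c j * k p (pts j.succ)) + b ⬝ᵥ M *ᵥ b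
      = E * (k0 - q) ^ 2 := by
    rw [hsum, hcb, hMval]; ring
  rw [hσD, hσDt]
  calc (Real.sqrt (σ2D p) - Real.sqrt (σ2Dt p)) ^ 2
      ≤ σ2Dt p - σ2D p := sqrt_diff_sq_le hσ2D0 hle
    _ = E * (k0 - q) ^ 2 := hdiff
    _ = E * k0 ^ 2 + k0 * (∑ j : Fin n, c j * k p (pts j.succ)) + b ⬝ᵥ M *ᵥ b := hRHS.symm
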